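/- For all natural numbers m ≥ 1 and N ≥ 1, the set V_{m,N} = {ω ∈ 2^ℕ : ∃ n > N, |S_n(ω)/n − 1/2| > 1/m} satisfies μ(V_{m,N}) ≤ 2·exp(−2N/m²)/(1 − exp(−2/m²)). -/

import Mathlib

open MeasureTheory Filter
open scoped ENNReal

/-- The sum of the first `n` coordinates of a point of Cantor space, as a real number. -/
noncomputable def coinSum (X : ℕ → Bool) (n : ℕ) : ℝ :=
  ∑ i ∈ Finset.range n, ((X i).toNat : ℝ)

/-- `μ` is the fair-coin measure on Cantor space: the probability measure under which the
coordinates are i.i.d. Bernoulli(1/2), i.e. every finite cylinder determined by prescribing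
the coordinates in a finite set `s` has measure `(1/2)^|s|`. -/
def IsFairCoin (μ : Measure (ℕ → Bool)) : Prop :=
  IsProbabilityMeasure μ ∧
    ∀ (s : Finset ℕ) (f : ℕ → Bool),
      μ {X | ∀ i ∈ s, X i = f i} = (1 / 2) ^ s.card

open scoped Classical

/-- Chernoff/Hoeffding upper-tail count bound for fair coin strings of length `n`. -/
lemma chernoff_upper (n m : ℕ) (hm : 1 ≤ m) :
    ((Finset.univ.filter (fun w : Fin n → Bool =>
        (n : ℝ) / 2 + n / m < ∑ i, ((w i).toNat : ℝ))).card : ℝ)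
      ≤ 2 ^ n * Real.exp (-2 * n / m ^ 2) := by
  have hm0 : (0 : ℝ) < m := by exact_mod_cast hm
  set x : ℝ := 2 / m with hxdef
  have hx : 0 < x := by positivity
  set U := Finset.univ.filter (fun w : Fin n → Bool =>
      (n : ℝ) / 2 + n / m < ∑ i, ((w i).toNat : ℝ)) with hU
  -- Step 1: card U * exp(x*n + x^2*n) ≤ ∑_w exp(2x * S w)
  have hkey : (U.card : ℝ) * Real.exp (x * n + x ^ 2 * n)
      ≤ ∑ w : Fin n → Bool, Real.exp (2 * x * ∑ i, ((w i).toNat : ℝ)) := by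
    have h1 : (U.card : ℝ) * Real.exp (x * n + x ^ 2 * n)
        ≤ ∑ w ∈ U, Real.exp (2 * x * ∑ i, ((w i).toNat : ℝ)) := by
      have := Finset.card_nsmul_le_sum U
        (fun w => Real.exp (2 * x * ∑ i, ((w i).toNat : ℝ)))
        (Real.exp (x * n + x ^ 2 * n)) ?_
      · simpa [nsmul_eq_mul] using this
      · intro w hw
        rw [hU, Finset.mem_filter] at hw
        apply Real.exp_le_exp.2
        have hx2 : x ^ 2 = 2 * x / m := by
          rw [hxdef]; field_simp
        have : x * n + x ^ 2 * n = 2 * x * ((n : ℝ) / 2 + n / m) := by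
          rw [hx2]; field_simp
        rw [this]
        have := hw.2
        nlinarith [this, hx]
    refine h1.trans (Finset.sum_le_sum_of_subset_of_nonneg (Finset.filter_subset _ _) ?_)
    intro w _ _
    positivity
  -- Step 2: the sum factorizes
  have hsum : ∑ w : Fin n → Bool, Real.exp (2 * x * ∑ i, ((w i).toNat : ℝ))
      = (1 + Real.exp (2 * x)) ^ n := by
    have hterm : ∀ w : Fin n → Bool,
        Real.exp (2 * x * ∑ i, ((w i).toNat : ℝ))
          = ∏ i, Real.exp (2 * x * ((w i).toNat : ℝ)) := by
      intro w
      rw [Finset.mul_sum, Real.exp_sum]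
    simp_rw [hterm]
    have := Finset.prod_univ_sum (fun _ : Fin n => (Finset.univ : Finset Bool))
      (fun _ b => Real.exp (2 * x * ((b).toNat : ℝ)))
    rw [Fintype.piFinset_univ] at this
    rw [← this]
    simp only [Finset.prod_const, Finset.card_univ, Fintype.card_fin]
    congr 1
    simp [add_comm]
  -- Step 3: base bound via cosh ≤ exp
  have hbase : 1 + Real.exp (2 * x) ≤ 2 * Real.exp (x + x ^ 2 / 2) := by
    have hcosh : 1 + Real.exp (2 * x) = 2 * Real.exp x * Real.cosh x := by
      rw [Real.cosh_eq]
      have h2 : Real.exp (2 * x) = Real.exp x * Real.exp x := by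
        rw [← Real.exp_add]; ring_nf
      have h3 : Real.exp (-x) * Real.exp x = 1 := by
        rw [← Real.exp_add]; simp
      nlinarith [h2, h3]
    rw [hcosh, Real.exp_add]
    have := Real.cosh_le_exp_half_sq x
    nlinarith [Real.exp_pos x, this]
  -- Combine
  have hcard : (U.card : ℝ) * Real.exp (x * n + x ^ 2 * n)
      ≤ (2 * Real.exp (x + x ^ 2 / 2)) ^ n := by
    refine (hkey.trans ?_)
    rw [hsum]
    exact pow_le_pow_left₀ (by positivity) hbase n
  have hrhs : (2 * Real.exp (x + x ^ 2 / 2)) ^ n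
      = 2 ^ n * Real.exp (-2 * n / m ^ 2) * Real.exp (x * n + x ^ 2 * n) := by
    rw [mul_pow, ← Real.exp_nat_mul, mul_assoc, ← Real.exp_add]
    congr 2
    have hx2 : x ^ 2 = 4 / m ^ 2 := by rw [hxdef]; field_simp; ring
    rw [hx2]
    field_simp
    ring
  rw [hrhs] at hcard
  have hexp : 0 < Real.exp (x * n + x ^ 2 * n) := Real.exp_pos _
  exact le_of_mul_le_mul_right hcard hexp

/-- Lower tail by symmetry. -/
lemma chernoff_lower (n m : ℕ) (hm : 1 ≤ m) :
    ((Finset.univ.filter (fun w : Fin n → Bool =>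
        ∑ i, ((w i).toNat : ℝ) < (n : ℝ) / 2 - n / m)).card : ℝ)
      ≤ 2 ^ n * Real.exp (-2 * n / m ^ 2) := by
  refine le_trans ?_ (chernoff_upper n m hm)
  have : (Finset.univ.filter (fun w : Fin n → Bool =>
        ∑ i, ((w i).toNat : ℝ) < (n : ℝ) / 2 - n / m)).card
      ≤ (Finset.univ.filter (fun w : Fin n → Bool =>
        (n : ℝ) / 2 + n / m < ∑ i, ((w i).toNat : ℝ))).card := by
    apply Finset.card_le_card_of_injOn (fun w => fun i => !(w i))
    · intro w hw
      rw [Finset.mem_coe, Finset.mem_filter] at hw ⊢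
      refine ⟨Finset.mem_univ _, ?_⟩
      have hflip : ∑ i, (((!(w i))).toNat : ℝ) = n - ∑ i, ((w i).toNat : ℝ) := by
        have : ∀ i : Fin n, (((!(w i))).toNat : ℝ) = 1 - ((w i).toNat : ℝ) := by
          intro i; cases w i <;> simp
        simp_rw [this]
        rw [Finset.sum_sub_distrib]
        simp
      rw [hflip]
      have := hw.2
      linarith
    · intro w₁ _ w₂ _ h
      funext i
      have := congrFun h i
      simpa using this
  calc ((Finset.univ.filter (fun w : Fin n → Bool =>
        ∑ i, ((w i).toNat : ℝ) < (n : ℝ) / 2 - n / m)).card : ℝ)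
      ≤ ((Finset.univ.filter (fun w : Fin n → Bool =>
        (n : ℝ) / 2 + n / m < ∑ i, ((w i).toNat : ℝ))).card : ℝ) := by exact_mod_cast this
    _ ≤ _ := le_rfl

/-- Measure of the single-`n` deviation event. -/
lemma measure_An_le (μ : Measure (ℕ → Bool)) (hμ : IsFairCoin μ)
    (m n : ℕ) (hm : 1 ≤ m) (hn : 1 ≤ n) :
    μ {ω : ℕ → Bool | 1 / (m : ℝ) < |coinSum ω n / n - 1 / 2|}
      ≤ ENNReal.ofReal (2 * Real.exp (-2 * n / m ^ 2)) := by
  have hm0 : (0 : ℝ) < m := by exact_mod_cast hm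
  have hn0 : (0 : ℝ) < n := by exact_mod_cast hn
  set bad := Finset.univ.filter (fun w : Fin n → Bool =>
      1 / (m : ℝ) < |(∑ i, ((w i).toNat : ℝ)) / n - 1 / 2|) with hbad
  set D : (Fin n → Bool) → Set (ℕ → Bool) := fun w =>
      {X | ∀ i ∈ Finset.range n, X i = (fun j => if h : j < n then w ⟨j, h⟩ else false) i}
    with hD
  -- the event is covered by bad cylinders
  have hsub : {ω : ℕ → Bool | 1 / (m : ℝ) < |coinSum ω n / n - 1 / 2|}
      ⊆ ⋃ w ∈ bad, D w := by
    intro ω hω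
    have hcs : coinSum ω n = ∑ i : Fin n, ((ω i).toNat : ℝ) := by
      rw [coinSum, Finset.sum_range fun i => ((ω i).toNat : ℝ)]
    refine Set.mem_iUnion₂.2 ⟨fun i : Fin n => ω i, ?_, ?_⟩
    · rw [hbad, Finset.mem_filter]
      refine ⟨Finset.mem_univ _, ?_⟩
      rw [← hcs]
      exact hω
    · intro i hi
      rw [Finset.mem_range] at hi
      simp [hi]
  have h1 : μ {ω : ℕ → Bool | 1 / (m : ℝ) < |coinSum ω n / n - 1 / 2|}
      ≤ ∑ w ∈ bad, μ (D w) :=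
    (measure_mono hsub).trans (measure_biUnion_finset_le _ _)
  have h2 : ∀ w : Fin n → Bool, μ (D w) = (1 / 2 : ℝ≥0∞) ^ n := by
    intro w
    have := hμ.2 (Finset.range n) (fun j => if h : j < n then w ⟨j, h⟩ else false)
    rw [Finset.card_range] at this
    exact this
  have h3 : ∑ w ∈ bad, μ (D w) = (bad.card : ℝ≥0∞) * (1 / 2 : ℝ≥0∞) ^ n := by
    simp_rw [h2]
    rw [Finset.sum_const, nsmul_eq_mul]
  -- the bad set splits into upper and lower tails
  have hcardbound : (bad.card : ℝ) ≤ 2 ^ n * (2 * Real.exp (-2 * n / m ^ 2)) := by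
    set U := Finset.univ.filter (fun w : Fin n → Bool =>
        (n : ℝ) / 2 + n / m < ∑ i, ((w i).toNat : ℝ)) with hU
    set L := Finset.univ.filter (fun w : Fin n → Bool =>
        ∑ i, ((w i).toNat : ℝ) < (n : ℝ) / 2 - n / m) with hL
    have hUL : bad ⊆ U ∪ L := by
      intro w hw
      rw [hbad, Finset.mem_filter] at hw
      rcases lt_abs.1 hw.2 with h | h
      · refine Finset.mem_union_left _ ?_
        rw [hU, Finset.mem_filter]
        refine ⟨Finset.mem_univ _, ?_⟩
        set y := ∑ i, ((w i).toNat : ℝ)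
        have h4 := mul_lt_mul_of_pos_right h hn0
        have h5 : (y / n - 1 / 2) * n = y - n / 2 := by field_simp
        have h6 : (1 / (m : ℝ)) * n = n / m := by ring
        rw [h5, h6] at h4
        linarith
      · refine Finset.mem_union_right _ ?_
        rw [hL, Finset.mem_filter]
        refine ⟨Finset.mem_univ _, ?_⟩
        set y := ∑ i, ((w i).toNat : ℝ)
        have h4 := mul_lt_mul_of_pos_right h hn0
        have h5 : (-(y / n - 1 / 2)) * n = n / 2 - y := by field_simp; ring
        have h6 : (1 / (m : ℝ)) * n = n / m := by ring
        rw [h5, h6] at h4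
        linarith
    have hcards : bad.card ≤ U.card + L.card :=
      (Finset.card_le_card hUL).trans (Finset.card_union_le _ _)
    have := chernoff_upper n m hm
    have := chernoff_lower n m hm
    have hc : (bad.card : ℝ) ≤ (U.card : ℝ) + (L.card : ℝ) := by exact_mod_cast hcards
    linarith
  -- put everything together
  refine (h1.trans_eq h3).trans ?_
  have hhalf : (1 / 2 : ℝ≥0∞) ^ n = ENNReal.ofReal ((1 / 2 : ℝ) ^ n) := by
    rw [ENNReal.ofReal_pow (by norm_num)]
    congr 1
    rw [one_div, one_div, ENNReal.ofReal_inv_of_pos (by norm_num)]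
    norm_num
  rw [hhalf, ← ENNReal.ofReal_natCast, ← ENNReal.ofReal_mul (by positivity)]
  apply ENNReal.ofReal_le_ofReal
  have hpow : (2 : ℝ) ^ n * (1 / 2 : ℝ) ^ n = 1 := by
    rw [← mul_pow]; norm_num
  calc (bad.card : ℝ) * (1 / 2 : ℝ) ^ n
      ≤ 2 ^ n * (2 * Real.exp (-2 * n / m ^ 2)) * (1 / 2 : ℝ) ^ n := by
        apply mul_le_mul_of_nonneg_right hcardbound (by positivity)
    _ = 2 * Real.exp (-2 * n / m ^ 2) := by
        rw [mul_comm ((2:ℝ)^n) _, mul_assoc, hpow, mul_one]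

theorem measure_VmN_le (μ : Measure (ℕ → Bool)) (hμ : IsFairCoin μ)
    (m N : ℕ) (hm : 1 ≤ m) (hN : 1 ≤ N) :
    μ {ω | ∃ n : ℕ, N < n ∧ 1 / (m : ℝ) < |coinSum ω n / n - 1 / 2|}
      ≤ ENNReal.ofReal
          (2 * Real.exp (-2 * N / m ^ 2) / (1 - Real.exp (-2 / m ^ 2))) := by
  have hm0 : (0 : ℝ) < m := by exact_mod_cast hm
  set r : ℝ := Real.exp (-2 / m ^ 2) with hr
  have hr0 : 0 < r := Real.exp_pos _
  have hr1 : r < 1 := by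
    rw [hr]
    have h2 : (0 : ℝ) < 2 / (m : ℝ) ^ 2 := by positivity
    calc Real.exp (-2 / (m : ℝ) ^ 2) = Real.exp (-(2 / (m : ℝ) ^ 2)) := by rw [neg_div]
      _ < 1 := Real.exp_lt_one_iff.2 (by linarith)
  set C : ℝ := 2 * Real.exp (-2 * ((N : ℝ) + 1) / m ^ 2) with hC
  have hterm : ∀ k : ℕ, 2 * Real.exp (-2 * ((N + 1 + k : ℕ) : ℝ) / m ^ 2) = C * r ^ k := by
    intro k
    rw [hC, hr, mul_assoc]
    congr 1
    rw [← Real.exp_nat_mul, ← Real.exp_add]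
    congr 1
    push_cast
    field_simp
    ring
  have hsummable : Summable (fun k : ℕ => C * r ^ k) :=
    (summable_geometric_of_lt_one hr0.le hr1).mul_left C
  calc μ {ω | ∃ n : ℕ, N < n ∧ 1 / (m : ℝ) < |coinSum ω n / n - 1 / 2|}
      ≤ μ (⋃ k : ℕ, {ω : ℕ → Bool |
          1 / (m : ℝ) < |coinSum ω (N + 1 + k) / (N + 1 + k : ℕ) - 1 / 2|}) := by
        apply measure_mono
        rintro ω ⟨n, hn, hb⟩
        refine Set.mem_iUnion.2 ⟨n - (N + 1), ?_⟩
        have hnn : N + 1 + (n - (N + 1)) = n := by omega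
        rw [hnn]
        exact hb
    _ ≤ ∑' k : ℕ, μ {ω : ℕ → Bool |
          1 / (m : ℝ) < |coinSum ω (N + 1 + k) / (N + 1 + k : ℕ) - 1 / 2|} :=
        measure_iUnion_le _
    _ ≤ ∑' k : ℕ, ENNReal.ofReal (2 * Real.exp (-2 * ((N + 1 + k : ℕ) : ℝ) / m ^ 2)) :=
        ENNReal.tsum_le_tsum fun k => measure_An_le μ hμ m (N + 1 + k) hm (by omega)
    _ = ∑' k : ℕ, ENNReal.ofReal (C * r ^ k) := by simp_rw [hterm]
    _ = ENNReal.ofReal (∑' k : ℕ, C * r ^ k) :=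
        (ENNReal.ofReal_tsum_of_nonneg (fun k => by positivity) hsummable).symm
    _ ≤ ENNReal.ofReal (2 * Real.exp (-2 * N / m ^ 2) / (1 - r)) := by
        apply ENNReal.ofReal_le_ofReal
        rw [tsum_mul_left, tsum_geometric_of_lt_one hr0.le hr1, ← div_eq_mul_inv]
        have hCle : C ≤ 2 * Real.exp (-2 * N / m ^ 2) := by
          rw [hC]
          have hle : -2 * ((N : ℝ) + 1) / m ^ 2 ≤ -2 * N / m ^ 2 :=
            div_le_div_of_nonneg_right (by linarith) (by positivity)
          exact mul_le_mul_of_nonneg_left (Real.exp_le_exp.2 hle) (by norm_num)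
        have h1r : 0 < 1 - r := by linarith
        gcongr
    _ = _ := by rw [hr]
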